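/- Let n ≥ 2 and let Γ be a subgroup of SL_n(ℤ) all of whose non-identity elements are hyperbolic, i.e., no complex eigenvalue of any γ ≠ 1 in Γ has absolute value 1. Then for every homeomorphism f of the torus T^n = ℝⁿ/ℤⁿ satisfying f(x) ∈ Γ·x for all x ∈ T^n, there exists γ ∈ Γ such that f(x) = γ·x for all x ∈ T^n. -/

import Mathlib

open Set Polynomial

/-- The action induced on the torus `Tⁿ = ℝⁿ/ℤⁿ = (ℝ/ℤ)ⁿ` by an integer matrix `γ`
(the map induced by the linear map `x ↦ γx` of `ℝⁿ`). -/
noncomputable def torusAct {n : ℕ} (γ : Matrix (Fin n) (Fin n) ℤ) (x : Fin n → AddCircle (1 : ℝ)) :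
    Fin n → AddCircle (1 : ℝ) :=
  fun j => ∑ i, γ j i • x i

lemma torusAct_continuous {n : ℕ} (γ : Matrix (Fin n) (Fin n) ℤ) :
    Continuous (torusAct γ) := by
  apply continuous_pi
  intro j
  exact continuous_finset_sum _ fun i _ => (continuous_apply i).zsmul (γ j i)

lemma det_smul_eq_zero {n : ℕ} (M : Matrix (Fin n) (Fin n) ℤ)
    (x : Fin n → AddCircle (1 : ℝ)) (hx : ∀ j, ∑ i, M j i • x i = 0) (k : Fin n) :
    M.det • x k = 0 := by
  have h1 : M.det • x k = ∑ i, ((M.det • (1 : Matrix (Fin n) (Fin n) ℤ)) k i) • x i := by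
    rw [Finset.sum_congr rfl (g := fun i => if i = k then M.det • x k else 0)]
    · simp
    · intro i _
      by_cases h : i = k
      · simp [h]
      · simp [Matrix.smul_apply, Matrix.one_apply, h, Ne.symm h]
  rw [h1, ← Matrix.adjugate_mul]
  calc ∑ i, ((M.adjugate * M) k i) • x i
      = ∑ i, ∑ j, (M.adjugate k j * M j i) • x i := by
        simp [Matrix.mul_apply, Finset.sum_smul]
    _ = ∑ j, ∑ i, M.adjugate k j • (M j i • x i) := by
        rw [Finset.sum_comm]
        simp [mul_smul]
    _ = ∑ j, M.adjugate k j • (∑ i, M j i • x i) := by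
        simp [Finset.smul_sum]
    _ = 0 := by simp [hx]

lemma torsion_countable (d : ℤ) (hd : d ≠ 0) :
    {y : AddCircle (1 : ℝ) | d • y = 0}.Countable := by
  apply Set.Countable.mono (s₁ := _) ?_
    (Set.countable_range (fun m : ℤ => (((m : ℝ) / (d : ℝ)) : AddCircle (1:ℝ))))
  intro y hy
  obtain ⟨t, rfl⟩ := QuotientAddGroup.mk_surjective y
  have h2 : ((d • t : ℝ) : AddCircle (1:ℝ)) = 0 := by
    simpa using hy
  rw [AddCircle.coe_eq_zero_iff] at h2
  obtain ⟨m, hm⟩ := h2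
  refine ⟨m, ?_⟩
  have hdr : (d : ℝ) ≠ 0 := Int.cast_ne_zero.mpr hd
  have : (m : ℝ) / (d : ℝ) = t := by
    field_simp
    simpa [zsmul_eq_mul, mul_comm] using hm
  simp only [this]

lemma coin_countable {n : ℕ} (A B : Matrix (Fin n) (Fin n) ℤ) (h : (A - B).det ≠ 0) :
    {x : Fin n → AddCircle (1:ℝ) | torusAct A x = torusAct B x}.Countable := by
  set M := A - B with hM
  have hsub : {x : Fin n → AddCircle (1:ℝ) | torusAct A x = torusAct B x} ⊆
      {x : Fin n → AddCircle (1:ℝ) | ∀ k, x k ∈ {y : AddCircle (1:ℝ) | M.det • y = 0}} := by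
    intro x hx
    have hj : ∀ j, ∑ i, M j i • x i = 0 := by
      intro j
      have h0 : ∑ i, A j i • x i = ∑ i, B j i • x i := congrFun hx j
      calc ∑ i, M j i • x i = ∑ i, (A j i • x i - B j i • x i) := by
            apply Finset.sum_congr rfl
            intro i _
            rw [hM, Matrix.sub_apply, sub_smul]
        _ = ∑ i, A j i • x i - ∑ i, B j i • x i := Finset.sum_sub_distrib _ _
        _ = 0 := by rw [h0, sub_self]
    exact fun k => det_smul_eq_zero M x hj k
  exact Set.Countable.mono hsub (Set.countable_pi fun k => torsion_countable M.det h)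

lemma eval_one_charpoly {n : ℕ} (M : Matrix (Fin n) (Fin n) ℂ) :
    M.charpoly.eval 1 = (1 - M).det := by
  rw [Matrix.charpoly, ← Polynomial.coe_evalRingHom, RingHom.map_det]
  congr 1
  ext i j
  by_cases h : i = j
  · subst h; simp [Matrix.charmatrix_apply_eq, Matrix.one_apply]
  · simp [Matrix.charmatrix_apply_ne _ _ _ h, Matrix.one_apply, h]

-- det of difference nonzero
lemma det_sub_ne_zero {n : ℕ} (Γ : Subgroup (Matrix.SpecialLinearGroup (Fin n) ℤ))
    (hhyp : ∀ γ ∈ Γ, γ ≠ 1 → ∀ z : ℂ,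
      (((γ : Matrix (Fin n) (Fin n) ℤ)).map (Int.cast : ℤ → ℂ)).charpoly.IsRoot z →
        ‖z‖ ≠ 1)
    (γ γ' : Γ) (hne : γ ≠ γ') :
    ((γ : Matrix (Fin n) (Fin n) ℤ) - (γ' : Matrix (Fin n) (Fin n) ℤ)).det ≠ 0 := by
  set δ : Matrix.SpecialLinearGroup (Fin n) ℤ := (γ : Matrix.SpecialLinearGroup (Fin n) ℤ)⁻¹ * γ'
  have hδΓ : δ ∈ Γ := mul_mem (inv_mem γ.2) γ'.2
  have hδ1 : δ ≠ 1 := by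
    intro h
    apply hne
    have : (γ : Matrix.SpecialLinearGroup (Fin n) ℤ) = γ' := by
      have := congrArg (fun m => (γ : Matrix.SpecialLinearGroup (Fin n) ℤ) * m) h
      simpa [δ, mul_assoc] using this.symm
    exact Subtype.ext this
  have hroot := hhyp δ hδΓ hδ1 1
  have h1 : ¬ (((δ : Matrix (Fin n) (Fin n) ℤ)).map (Int.cast : ℤ → ℂ)).charpoly.IsRoot 1 := by
    intro h
    exact hroot h norm_one
  rw [Polynomial.IsRoot] at h1
  rw [eval_one_charpoly] at h1
  -- transfer to ℤ
  have h2 : ((1 : Matrix (Fin n) (Fin n) ℤ) - (δ : Matrix (Fin n) (Fin n) ℤ)).det ≠ 0 := by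
    intro h
    apply h1
    have : (1 : Matrix (Fin n) (Fin n) ℂ) - ((δ : Matrix (Fin n) (Fin n) ℤ)).map (Int.cast : ℤ → ℂ)
        = ((Int.castRingHom ℂ)).mapMatrix ((1 : Matrix (Fin n) (Fin n) ℤ) - (δ : Matrix (Fin n) (Fin n) ℤ)) := by
      simp [RingHom.mapMatrix_apply, Matrix.map_sub]
    rw [this, ← RingHom.map_det, h]
    simp
  -- relate det (γ - γ') to det (1 - δ)
  have h3 : (γ : Matrix (Fin n) (Fin n) ℤ) - (γ' : Matrix (Fin n) (Fin n) ℤ)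
      = (γ : Matrix (Fin n) (Fin n) ℤ) * ((1 : Matrix (Fin n) (Fin n) ℤ) - (δ : Matrix (Fin n) (Fin n) ℤ)) := by
    rw [Matrix.mul_sub, mul_one]
    congr 1
    rw [← Matrix.SpecialLinearGroup.coe_mul]
    congr 1
    simp [δ, ← mul_assoc]
    rfl
  rw [h3, Matrix.det_mul, Matrix.SpecialLinearGroup.det_coe, one_mul]
  exact h2

section Sierpinski

variable {ι : Type*} (F : ι → Set ℝ)

/-- Core step: inside `[p,q]` (with `p ∈ F a`, `q ∈ F b`, `a ≠ b`) find a nondegenerate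
closed subinterval avoiding `F m` and still meeting two distinct members of the family. -/
private lemma sierpinski_core (hcl : ∀ i, IsClosed (F i))
    (hdisj : ∀ i j, i ≠ j → ∀ t, t ∈ F i → t ∈ F j → False)
    {p q : ℝ} (hpq : p < q) (hcov : ∀ t ∈ Icc p q, ∃ i, t ∈ F i)
    {a b : ι} (hab : a ≠ b) (hpa : p ∈ F a) (hqb : q ∈ F b) (m : ι) :
    ∃ u v : ℝ, u < v ∧ Icc u v ⊆ Icc p q ∧ (∀ t ∈ Icc u v, t ∉ F m) ∧
      ∃ a' b', a' ≠ b' ∧ (Icc u v ∩ F a').Nonempty ∧ (Icc u v ∩ F b').Nonempty := by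
  -- c = sup of F a within [p,q]
  set Sa := F a ∩ Icc p q with hSa
  have hSa_cl : IsClosed Sa := (hcl a).inter isClosed_Icc
  have hSa_ne : Sa.Nonempty := ⟨p, hpa, le_refl p, hpq.le⟩
  have hSa_bdd : BddAbove Sa := (bddAbove_Icc (a := p) (b := q)).mono inter_subset_right
  set c := sSup Sa with hc
  have hcmem : c ∈ Sa := hSa_cl.csSup_mem hSa_ne hSa_bdd
  have hca : c ∈ F a := hcmem.1
  have hcI : c ∈ Icc p q := hcmem.2
  have hcq : c < q := lt_of_le_of_ne hcI.2 (fun h => hdisj a b hab c hca (h ▸ hqb))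
  -- d = inf of F b within [c,q]
  set Sb := F b ∩ Icc c q with hSb
  have hSb_cl : IsClosed Sb := (hcl b).inter isClosed_Icc
  have hSb_ne : Sb.Nonempty := ⟨q, hqb, hcq.le, le_refl q⟩
  have hSb_bdd : BddBelow Sb := (bddBelow_Icc : BddBelow (Icc c q)).mono inter_subset_right
  set d := sInf Sb with hd
  have hdmem : d ∈ Sb := hSb_cl.csInf_mem hSb_ne hSb_bdd
  have hdb : d ∈ F b := hdmem.1
  have hdI : d ∈ Icc c q := hdmem.2
  have hcd : c < d := lt_of_le_of_ne hdI.1 (fun h => hdisj a b hab c hca (h ▸ hdb))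
  have hdq : d ≤ q := hdI.2
  have hpc : p ≤ c := hcI.1
  -- no points of F a or F b strictly between c and d
  have hmid : ∀ t, c < t → t < d → t ∉ F a ∧ t ∉ F b := by
    intro t hct htd
    constructor
    · intro hta
      have : t ∈ Sa := ⟨hta, le_trans hpc hct.le, le_trans htd.le hdq⟩
      exact absurd (le_csSup hSa_bdd this) (not_le.mpr hct)
    · intro htb
      have : t ∈ Sb := ⟨htb, hct.le, le_trans htd.le hdq⟩
      exact absurd (csInf_le hSb_bdd this) (not_le.mpr htd)
  have hIcd : Icc c d ⊆ Icc p q := Icc_subset_Icc hpc hdq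
  have hda : d ∉ F a := fun h => hdisj a b hab d h hdb
  have hcb : c ∉ F b := fun h => hdisj a b hab c hca h
  by_cases hm : (F m ∩ Icc c d) = ∅
  · -- [c,d] avoids F m already
    refine ⟨c, d, hcd, hIcd, ?_, a, b, hab, ⟨c, ⟨le_refl c, hcd.le⟩, hca⟩,
      ⟨d, ⟨hcd.le, le_refl d⟩, hdb⟩⟩
    intro t ht htm
    exact (Set.eq_empty_iff_forall_notMem.1 hm t) ⟨htm, ht⟩
  · have hmne : (F m ∩ Icc c d).Nonempty := Set.nonempty_iff_ne_empty.mpr hm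
    by_cases hma : m = a
    · -- avoid F a: take right half [mid, d]
      subst hma
      set mid := (c + d) / 2 with hmiddef
      have h1 : c < mid := by simp [hmiddef]; linarith
      have h2 : mid < d := by simp [hmiddef]; linarith
      obtain ⟨i, hi⟩ := hcov mid (hIcd ⟨h1.le, h2.le⟩)
      have hia : i ≠ m := fun h => (hmid mid h1 h2).1 (h ▸ hi)
      have hib : i ≠ b := fun h => (hmid mid h1 h2).2 (h ▸ hi)
      refine ⟨mid, d, h2, Icc_subset_Icc (le_trans hpc h1.le) hdq, ?_,
        i, b, hib, ⟨mid, ⟨le_refl mid, h2.le⟩, hi⟩, ⟨d, ⟨h2.le, le_refl d⟩, hdb⟩⟩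
      intro t ht htm
      rcases eq_or_lt_of_le ht.2 with h | h
      · exact hda (h ▸ htm)
      · exact (hmid t (lt_of_lt_of_le h1 ht.1) h).1 htm
    · by_cases hmb : m = b
      · -- avoid F b: take left half [c, mid]
        subst hmb
        set mid := (c + d) / 2 with hmiddef
        have h1 : c < mid := by simp [hmiddef]; linarith
        have h2 : mid < d := by simp [hmiddef]; linarith
        obtain ⟨i, hi⟩ := hcov mid (hIcd ⟨h1.le, h2.le⟩)
        have hia : i ≠ a := fun h => (hmid mid h1 h2).1 (h ▸ hi)
        refine ⟨c, mid, h1, Icc_subset_Icc hpc (le_trans h2.le hdq), ?_,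
          a, i, fun h => hia h.symm, ⟨c, ⟨le_refl c, h1.le⟩, hca⟩,
          ⟨mid, ⟨h1.le, le_refl mid⟩, hi⟩⟩
        intro t ht htm
        rcases eq_or_lt_of_le ht.1 with h | h
        · exact hcb (h ▸ htm)
        · exact (hmid t h (lt_of_le_of_lt ht.2 h2)).2 htm
      · -- m ∉ {a, b} : cut before the first point of F m in [c,d]
        set Sm := F m ∩ Icc c d with hSm
        have hSm_cl : IsClosed Sm := (hcl m).inter isClosed_Icc
        have hSm_bdd : BddBelow Sm := (bddBelow_Icc : BddBelow (Icc c d)).mono inter_subset_right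
        set e := sInf Sm with he
        have hemem : e ∈ Sm := hSm_cl.csInf_mem hmne hSm_bdd
        have hem : e ∈ F m := hemem.1
        have heI : e ∈ Icc c d := hemem.2
        have hce : c < e := lt_of_le_of_ne heI.1
          (fun h => hdisj m a hma e hem (h ▸ hca : e ∈ F a))
        set mid := (c + e) / 2 with hmiddef
        have h1 : c < mid := by simp [hmiddef]; linarith
        have h2 : mid < e := by simp [hmiddef]; linarith
        have hmd : mid < d := lt_of_lt_of_le h2 heI.2
        obtain ⟨i, hi⟩ := hcov mid (hIcd ⟨h1.le, hmd.le⟩)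
        have hia : i ≠ a := fun h => (hmid mid h1 hmd).1 (h ▸ hi)
        refine ⟨c, mid, h1, Icc_subset_Icc hpc (le_trans hmd.le hdq), ?_,
          a, i, fun h => hia h.symm, ⟨c, ⟨le_refl c, h1.le⟩, hca⟩,
          ⟨mid, ⟨h1.le, le_refl mid⟩, hi⟩⟩
        intro t ht htm
        have hte : t < e := lt_of_le_of_lt ht.2 h2
        have : t ∈ Sm := ⟨htm, ht.1, le_trans hte.le heI.2⟩
        exact absurd (csInf_le hSm_bdd this) (not_le.mpr hte)

end Sierpinski

/-- **Sierpiński's theorem for the unit interval**: `[0,1]` cannot be covered by countably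
many pairwise disjoint closed sets with (at least) two of them nonempty on `[0,1]`. -/
lemma sierpinski_interval {ι : Type*} [Countable ι] (F : ι → Set ℝ)
    (hcl : ∀ i, IsClosed (F i))
    (hdisj : ∀ i j, i ≠ j → ∀ t, t ∈ F i → t ∈ F j → False)
    (hcov : ∀ t ∈ Icc (0:ℝ) 1, ∃ i, t ∈ F i)
    {i₀ i₁ : ι} (hne : i₀ ≠ i₁) (h0 : (0:ℝ) ∈ F i₀) (h1 : (1:ℝ) ∈ F i₁) : False := by
  haveI : Nonempty ι := ⟨i₀⟩
  obtain ⟨e, he⟩ := exists_surjective_nat ι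
  -- The type of "good" intervals
  let Good : ℝ × ℝ → Prop := fun J =>
    J.1 < J.2 ∧ Icc J.1 J.2 ⊆ Icc (0:ℝ) 1 ∧
      ∃ a b, a ≠ b ∧ (Icc J.1 J.2 ∩ F a).Nonempty ∧ (Icc J.1 J.2 ∩ F b).Nonempty
  have hstep : ∀ J : ℝ × ℝ, Good J → ∀ m : ι, ∃ J' : ℝ × ℝ, Good J' ∧
      Icc J'.1 J'.2 ⊆ Icc J.1 J.2 ∧ ∀ t ∈ Icc J'.1 J'.2, t ∉ F m := by
    rintro ⟨u, v⟩ ⟨huv, hsub, a, b, hab, ⟨p, hpI, hpa⟩, ⟨q, hqI, hqb⟩⟩ m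
    have hpq : p ≠ q := fun h => hdisj a b hab p hpa (h ▸ hqb)
    rcases hpq.lt_or_gt with h | h
    · obtain ⟨u', v', h1', h2', h3', a', b', hab', hw1, hw2⟩ :=
        sierpinski_core F hcl hdisj h
          (fun t ht => hcov t (hsub (Icc_subset_Icc hpI.1 hqI.2 ht))) hab hpa hqb m
      have hsub' : Icc u' v' ⊆ Icc u v := h2'.trans (Icc_subset_Icc hpI.1 hqI.2)
      exact ⟨(u', v'), ⟨h1', hsub'.trans hsub, a', b', hab', hw1, hw2⟩, hsub', h3'⟩
    · obtain ⟨u', v', h1', h2', h3', a', b', hab', hw1, hw2⟩ :=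
        sierpinski_core F hcl hdisj h
          (fun t ht => hcov t (hsub (Icc_subset_Icc hqI.1 hpI.2 ht)))
          (Ne.symm hab) hqb hpa m
      have hsub' : Icc u' v' ⊆ Icc u v := h2'.trans (Icc_subset_Icc hqI.1 hpI.2)
      exact ⟨(u', v'), ⟨h1', hsub'.trans hsub, a', b', hab', hw1, hw2⟩, hsub', h3'⟩
  have hJ0 : Good (0, 1) :=
    ⟨zero_lt_one, subset_rfl, i₀, i₁, hne, ⟨0, ⟨le_refl _, zero_le_one⟩, h0⟩,
      ⟨1, ⟨zero_le_one, le_refl _⟩, h1⟩⟩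
  -- build the nested sequence
  let X := {J : ℝ × ℝ // Good J}
  let step : X → ℕ → X := fun J k => ⟨(hstep J.1 J.2 (e k)).choose, (hstep J.1 J.2 (e k)).choose_spec.1⟩
  let seq : ℕ → X := fun k => Nat.rec (step ⟨(0,1), hJ0⟩ 0) (fun k ih => step ih (k+1)) k
  have hseqS : ∀ k, seq (k+1) = step (seq k) (k+1) := fun k => rfl
  have hstep_sub : ∀ (J : X) (k : ℕ), Icc (step J k).1.1 (step J k).1.2 ⊆ Icc J.1.1 J.1.2 :=
    fun J k => (hstep J.1 J.2 (e k)).choose_spec.2.1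
  have hstep_avoid : ∀ (J : X) (k : ℕ), ∀ t ∈ Icc (step J k).1.1 (step J k).1.2, t ∉ F (e k) :=
    fun J k => (hstep J.1 J.2 (e k)).choose_spec.2.2
  have havoid : ∀ k, ∀ t ∈ Icc (seq k).1.1 (seq k).1.2, t ∉ F (e k) := by
    intro k
    cases k with
    | zero => exact hstep_avoid ⟨(0,1), hJ0⟩ 0
    | succ k => exact hstep_avoid (seq k) (k+1)
  have hnest : ∀ k, Icc (seq (k+1)).1.1 (seq (k+1)).1.2 ⊆ Icc (seq k).1.1 (seq k).1.2 :=
    fun k => hstep_sub (seq k) (k+1)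
  obtain ⟨x, hx⟩ := IsCompact.nonempty_iInter_of_sequence_nonempty_isCompact_isClosed
    (fun k => Icc (seq k).1.1 (seq k).1.2) hnest
    (fun k => nonempty_Icc.mpr (seq k).2.1.le)
    (isCompact_Icc) (fun k => isClosed_Icc)
  have hx' : ∀ k, x ∈ Icc (seq k).1.1 (seq k).1.2 := by
    simpa [Set.mem_iInter] using hx
  have hx01 : x ∈ Icc (0:ℝ) 1 := (seq 0).2.2.1 (hx' 0)
  obtain ⟨i, hi⟩ := hcov x hx01
  obtain ⟨k, rfl⟩ := he i
  exact havoid k x (hx' k) hi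

noncomputable def piQuot (n : ℕ) : (Fin n → ℝ) → (Fin n → AddCircle (1:ℝ)) :=
  fun v i => ((v i : ℝ) : AddCircle (1:ℝ))

lemma piQuot_continuous (n : ℕ) : Continuous (piQuot n) :=
  continuous_pi fun i => (AddCircle.continuous_mk' 1).comp (continuous_apply i)

lemma piQuot_surjective (n : ℕ) : Function.Surjective (piQuot n) := by
  intro x
  refine ⟨fun i => (QuotientAddGroup.mk_surjective (x i)).choose, funext fun i => ?_⟩
  exact (QuotientAddGroup.mk_surjective (x i)).choose_spec

lemma piQuot_fiber_countable (n : ℕ) (c : Fin n → AddCircle (1:ℝ)) :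
    (piQuot n ⁻¹' {c}).Countable := by
  obtain ⟨v₀, hv₀⟩ := piQuot_surjective n c
  have hsub : piQuot n ⁻¹' {c} ⊆
      {v : Fin n → ℝ | ∀ i, v i ∈ Set.range (fun m : ℤ => v₀ i + (m : ℝ))} := by
    intro v hv
    intro i
    have h1 : ((v i : ℝ) : AddCircle (1:ℝ)) = ((v₀ i : ℝ) : AddCircle (1:ℝ)) := by
      have h2 : piQuot n v = piQuot n v₀ := by
        rw [show piQuot n v = c from hv, hv₀]
      exact congrFun h2 i
    rw [QuotientAddGroup.eq_iff_sub_mem] at h1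
    obtain ⟨m, hm⟩ := AddSubgroup.mem_zmultiples_iff.mp h1
    refine ⟨m, ?_⟩
    have : (m : ℝ) = v i - v₀ i := by simpa [zsmul_eq_mul] using hm
    show v₀ i + (m : ℝ) = v i
    linarith
  exact Set.Countable.mono hsub (Set.countable_pi fun i => Set.countable_range _)

lemma piQuot_preimage_countable (n : ℕ) {C : Set (Fin n → AddCircle (1:ℝ))}
    (hC : C.Countable) : (piQuot n ⁻¹' C).Countable := by
  rw [← Set.biUnion_preimage_singleton]
  exact Set.Countable.biUnion hC fun c _ => piQuot_fiber_countable n c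

/-- **Hyperbolic subgroups have rigid orbit structure on the torus.** -/
theorem stmt6 (n : ℕ) (hn : 2 ≤ n)
    (Γ : Subgroup (Matrix.SpecialLinearGroup (Fin n) ℤ))
    (hhyp : ∀ γ ∈ Γ, γ ≠ 1 → ∀ z : ℂ,
      (((γ : Matrix (Fin n) (Fin n) ℤ)).map (Int.cast : ℤ → ℂ)).charpoly.IsRoot z →
        ‖z‖ ≠ 1)
    (f : (Fin n → AddCircle (1 : ℝ)) ≃ₜ (Fin n → AddCircle (1 : ℝ)))
    (hf : ∀ x : Fin n → AddCircle (1 : ℝ),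
      ∃ γ ∈ Γ, f x = torusAct (γ : Matrix (Fin n) (Fin n) ℤ) x) :
    ∃ γ ∈ Γ, ∀ x : Fin n → AddCircle (1 : ℝ),
      f x = torusAct (γ : Matrix (Fin n) (Fin n) ℤ) x := by
  haveI : Fact ((0:ℝ) < 1) := ⟨one_pos⟩
  haveI : Nonempty (Fin n) := ⟨⟨0, by omega⟩⟩
  haveI : Countable (Matrix (Fin n) (Fin n) ℤ) :=
    (inferInstance : Countable (Fin n → Fin n → ℤ))
  haveI : Countable (Matrix.SpecialLinearGroup (Fin n) ℤ) :=
    (inferInstance : Countable {A : Matrix (Fin n) (Fin n) ℤ // A.det = 1})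
  haveI : Countable ↥Γ := inferInstance
  classical
  set mat : Γ → Matrix (Fin n) (Fin n) ℤ :=
    fun γ => ((γ : Matrix.SpecialLinearGroup (Fin n) ℤ) : Matrix (Fin n) (Fin n) ℤ) with hmat
  set C : Set (Fin n → AddCircle (1:ℝ)) :=
    ⋃ (pr : Γ × Γ), ⋃ (_ : pr.1 ≠ pr.2), {x | torusAct (mat pr.1) x = torusAct (mat pr.2) x}
    with hCdef
  have hdet : ∀ (γ γ' : Γ), γ ≠ γ' → ((mat γ) - (mat γ')).det ≠ 0 :=
    fun γ γ' h => det_sub_ne_zero Γ hhyp γ γ' h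
  have hCcount : C.Countable := by
    apply Set.countable_iUnion
    intro pr
    apply Set.countable_iUnion
    intro hne
    exact coin_countable _ _ (hdet pr.1 pr.2 hne)
  have hmemC : ∀ (γ γ' : Γ), γ ≠ γ' → ∀ x, torusAct (mat γ) x = torusAct (mat γ') x → x ∈ C := by
    intro γ γ' hne x hx
    exact Set.mem_iUnion.2 ⟨(γ, γ'), Set.mem_iUnion.2 ⟨hne, hx⟩⟩
  have hDcount : ((piQuot n) ⁻¹' C).Countable := piQuot_preimage_countable n hCcount
  have hDdense : Dense ((piQuot n ⁻¹' C)ᶜ) := hDcount.dense_compl ℝ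
  have hCdense : Dense Cᶜ := by
    rw [dense_iff_inter_open]
    intro U hU hUne
    obtain ⟨x, hx⟩ := hUne
    obtain ⟨v, hv⟩ := piQuot_surjective n x
    obtain ⟨w, hw1, hw2⟩ := hDdense.exists_mem_open (hU.preimage (piQuot_continuous n))
      ⟨v, by simpa [hv] using hx⟩
    exact ⟨piQuot n w, hw2, hw1⟩
  have hrank : 1 < Module.rank ℝ (Fin n → ℝ) := by
    rw [rank_fin_fun]
    exact_mod_cast (by omega : 1 < n)
  have hpath : IsPathConnected ((piQuot n ⁻¹' C)ᶜ) :=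
    hDcount.isPathConnected_compl_of_one_lt_rank hrank
  have key : ∀ (x y : Fin n → AddCircle (1:ℝ)), x ∈ Cᶜ → y ∈ Cᶜ →
      ∀ (γx γy : Γ), f x = torusAct (mat γx) x → f y = torusAct (mat γy) y → γx = γy := by
    intro x y hx hy γx γy hfx hfy
    by_contra hne2
    obtain ⟨a, ha⟩ := piQuot_surjective n x
    obtain ⟨b, hb⟩ := piQuot_surjective n y
    have haD : a ∈ (piQuot n ⁻¹' C)ᶜ := by
      simp only [mem_compl_iff, mem_preimage, ha]; exact hx
    have hbD : b ∈ (piQuot n ⁻¹' C)ᶜ := by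
      simp only [mem_compl_iff, mem_preimage, hb]; exact hy
    obtain ⟨p, hp⟩ := hpath.joinedIn a haD b hbD
    set g : ℝ → (Fin n → AddCircle (1:ℝ)) := fun t => piQuot n (p.extend t) with hgdef
    have hgcont : Continuous g := (piQuot_continuous n).comp p.continuous_extend
    have hgC : ∀ t, g t ∈ Cᶜ := by
      intro t
      have h1 : p.extend t ∈ (piQuot n ⁻¹' C)ᶜ := hp (projIcc 0 1 zero_le_one t)
      exact h1
    set G : Γ → Set ℝ := fun γ => {t | f (g t) = torusAct (mat γ) (g t)} with hGdef
    have hGcl : ∀ γ, IsClosed (G γ) := fun γ =>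
      isClosed_eq (f.continuous.comp hgcont) ((torusAct_continuous _).comp hgcont)
    have hGdisj : ∀ γ γ', γ ≠ γ' → ∀ t, t ∈ G γ → t ∈ G γ' → False := by
      intro γ γ' hne t h1 h2
      exact hgC t (hmemC γ γ' hne (g t) (h1.symm.trans h2))
    have hGcov : ∀ t ∈ Icc (0:ℝ) 1, ∃ γ, t ∈ G γ := by
      intro t _
      obtain ⟨γ, hγΓ, hγ⟩ := hf (g t)
      exact ⟨⟨γ, hγΓ⟩, hγ⟩
    have h0 : (0:ℝ) ∈ G γx := by
      show f (g 0) = torusAct (mat γx) (g 0)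
      have hg0 : g 0 = x := by rw [hgdef]; simp only [Path.extend_zero]; rw [ha]
      rw [hg0]; exact hfx
    have h1' : (1:ℝ) ∈ G γy := by
      show f (g 1) = torusAct (mat γy) (g 1)
      have hg1 : g 1 = y := by rw [hgdef]; simp only [Path.extend_one]; rw [hb]
      rw [hg1]; exact hfy
    exact sierpinski_interval G hGcl hGdisj hGcov hne2 h0 h1'
  obtain ⟨x₀, hx₀C⟩ := hCdense.nonempty
  obtain ⟨γ₀, hγ₀Γ, hx₀⟩ := hf x₀
  refine ⟨γ₀, hγ₀Γ, ?_⟩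
  have heq : ⇑f = torusAct ((γ₀ : Matrix (Fin n) (Fin n) ℤ)) := by
    apply Continuous.ext_on hCdense f.continuous (torusAct_continuous _)
    intro x hx
    obtain ⟨γ, hγΓ, hfx⟩ := hf x
    have hkey := key x x₀ hx hx₀C ⟨γ, hγΓ⟩ ⟨γ₀, hγ₀Γ⟩ hfx hx₀
    have hγeq : γ = γ₀ := congrArg Subtype.val hkey
    rw [hfx, hγeq]
  intro x
  rw [heq]
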